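/- arXiv:2303.09742 — 2 statements merged into one kernel-verified Lean document; each statement's English description precedes it below -/
import Mathlib

section
/- Let G be a connected finite simple graph on n ≥ 3 vertices, let u be a vertex, and let v, w be two neighbors of u that are not adjacent to each other. Let x be a positive unit eigenvector of the distance matrix D(G) corresponding to the distance spectral radius ρ(G). Then x_w + x_u - x_v > 0. -/
open Matrix

/-- Lemma 4.3 of the paper (graph case): if `v, w` are two non-adjacent neighbors of a vertex
`u` in a connected graph `G` on `n ≥ 3` vertices and `x` is the positive unit Perron
eigenvector of the distance matrix for the distance spectral radius `ρ`, then
`x_w + x_u - x_v > 0`. -/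
theorem stmt_5 {V : Type*} [Fintype V] [DecidableEq V]
    (hV : 3 ≤ Fintype.card V) (G : SimpleGraph V) (hG : G.Connected)
    (u v w : V) (huv : G.Adj u v) (huw : G.Adj u w) (hvw : ¬ G.Adj v w) (hne : v ≠ w)
    (D : Matrix V V ℝ) (hD : D = Matrix.of fun a b => (G.dist a b : ℝ))
    (ρ : ℝ) (hmax : ∀ μ : ℝ, Module.End.HasEigenvalue (Matrix.mulVecLin D) μ → μ ≤ ρ)
    (x : V → ℝ) (hx : ∀ z, 0 < x z) (hunit : ∑ z, x z ^ 2 = 1)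
    (heig : D *ᵥ x = ρ • x) :
    0 < x w + x u - x v := by
  -- row equations
  have hrow : ∀ a, ∑ z, (G.dist a z : ℝ) * x z = ρ * x a := by
    intro a
    have := congrFun heig a
    simpa [hD, Matrix.mulVec, dotProduct] using this
  -- distance facts
  have hduv : G.dist u v = 1 := SimpleGraph.dist_eq_one_iff_adj.mpr huv
  have hduw : G.dist u w = 1 := SimpleGraph.dist_eq_one_iff_adj.mpr huw
  have hdvw : G.dist v w = 2 := by
    have hle : G.dist v w ≤ 2 := by
      have := SimpleGraph.dist_le (SimpleGraph.Walk.cons huv.symm huw.toWalk)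
      simpa using this
    have h0 : 0 < G.dist v w := hG.pos_dist_of_ne hne
    have h1 : G.dist v w ≠ 1 := fun h => hvw (SimpleGraph.dist_eq_one_iff_adj.mp h)
    omega
  -- ρ > 0
  have hρ : 0 < ρ := by
    have hsum : x v ≤ ∑ z, (G.dist u z : ℝ) * x z := by
      have := Finset.single_le_sum (f := fun z => (G.dist u z : ℝ) * x z)
        (fun z _ => mul_nonneg (by positivity) (hx z).le) (Finset.mem_univ v)
      simpa [hduv] using this
    rw [hrow u] at hsum
    by_contra h
    push_neg at h
    have : ρ * x u ≤ 0 := mul_nonpos_of_nonpos_of_nonneg h (hx u).le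
    linarith [hx v]
  -- key inequality
  have key : 3 * x v - x w ≤ ρ * (x w + x u - x v) := by
    have hsplit : ρ * (x w + x u - x v)
        = ∑ z, ((G.dist w z : ℝ) + G.dist u z - G.dist v z) * x z := by
      rw [mul_sub, mul_add, ← hrow w, ← hrow u, ← hrow v]
      rw [← Finset.sum_add_distrib, ← Finset.sum_sub_distrib]
      apply Finset.sum_congr rfl
      intro z _
      ring
    rw [hsplit]
    have hsub : ({v, w} : Finset V) ⊆ Finset.univ := Finset.subset_univ _
    have hnn : ∀ z ∈ Finset.univ, z ∉ ({v, w} : Finset V) →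
        0 ≤ ((G.dist w z : ℝ) + G.dist u z - G.dist v z) * x z := by
      intro z _ hz
      simp only [Finset.mem_insert, Finset.mem_singleton, not_or] at hz
      apply mul_nonneg _ (hx z).le
      have htri : G.dist v z ≤ G.dist v u + G.dist u z := hG.dist_triangle
      have hvu : G.dist v u = 1 := by rw [SimpleGraph.dist_comm]; exact hduv
      have hwz : 0 < G.dist w z := hG.pos_dist_of_ne (Ne.symm hz.2)
      have : G.dist v z ≤ G.dist w z + G.dist u z := by omega
      have := (Nat.cast_le (α := ℝ)).mpr this
      push_cast at this ⊢
      linarith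
    have hge := Finset.sum_le_sum_of_subset_of_nonneg hsub hnn
    refine le_trans (le_of_eq ?_) hge
    rw [Finset.sum_pair hne]
    have hdwv : G.dist w v = 2 := by rw [SimpleGraph.dist_comm]; exact hdvw
    simp [hdwv, hduv, hduw, hdvw, SimpleGraph.dist_self]
    push_cast
    ring
  by_contra h
  push_neg at h
  have h1 : ρ * (x w + x u - x v) ≤ 0 :=
    mul_nonpos_of_nonneg_of_nonpos hρ.le (by linarith)
  have h2 : 3 * x v ≤ x w := by linarith
  linarith [hx u, hx v]
end

section
/- Let T be a finite tree and let u₁, v₁, u₂, v₂ be vertices with u₁v₁ and u₂v₂ edges of T such that d_T(u₁,u₂) = d_T(v₁,v₂) + 2. For i = 1,2, let T_i be the component of T − u_iv_i containing u_i, and let x be a positive eigenvector of the distance matrix for ρ(T). Then ρ(T)(x_{u₁} − x_{u₂}) − ρ(T)(x_{v₁} − x_{v₂}) = 2(σ(T₂) − σ(T₁)), where σ(T_i) = Σ_{z ∈ V(T_i)} x_z. -/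
open Matrix
open scoped Classical

section Helpers
open SimpleGraph

variable {V : Type*} [Fintype V] [DecidableEq V]

lemma reach_step {T : SimpleGraph V} {u v : V} {a b : V} (p : T.Walk a b) :
    ((T.deleteEdges {s(u,v)}).Reachable u b ∨ (T.deleteEdges {s(u,v)}).Reachable v b) →
    ((T.deleteEdges {s(u,v)}).Reachable u a ∨ (T.deleteEdges {s(u,v)}).Reachable v a) := by
  induction p with
  | nil => exact id
  | @cons a c b hac q ih =>
    intro hb
    rcases ih hb with hu | hv
    · by_cases he : s(a, c) = s(u, v)
      · rw [Sym2.eq_iff] at he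
        rcases he with ⟨rfl, rfl⟩ | ⟨rfl, rfl⟩
        · exact Or.inl (Reachable.refl _)
        · exact Or.inr (Reachable.refl _)
      · have hadj : (T.deleteEdges {s(u,v)}).Adj a c := by simp [he, hac]
        exact Or.inl (hu.trans hadj.reachable.symm)
    · by_cases he : s(a, c) = s(u, v)
      · rw [Sym2.eq_iff] at he
        rcases he with ⟨rfl, rfl⟩ | ⟨rfl, rfl⟩
        · exact Or.inl (Reachable.refl _)
        · exact Or.inr (Reachable.refl _)
      · have hadj : (T.deleteEdges {s(u,v)}).Adj a c := by simp [he, hac]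
        exact Or.inr (hv.trans hadj.reachable.symm)

lemma reach_total {T : SimpleGraph V} (hc : T.Connected) {u v : V} (h : T.Adj u v) (z : V) :
    (T.deleteEdges {s(u,v)}).Reachable u z ∨ (T.deleteEdges {s(u,v)}).Reachable v z := by
  obtain ⟨p⟩ := hc z u
  exact reach_step p (Or.inl (Reachable.refl _))

lemma tree_bridge {T : SimpleGraph V} (hT : T.IsTree) {u v : V} (h : T.Adj u v) :
    ¬ (T.deleteEdges {s(u,v)}).Reachable u v := by
  have := (isAcyclic_iff_forall_edge_isBridge.mp hT.2) (T.mem_edgeSet.mpr h)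
  exact isBridge_iff.mp this

lemma dist_succ {T : SimpleGraph V} (hT : T.IsTree) {u v : V} (h : T.Adj u v) {z : V}
    (hz : (T.deleteEdges {s(u,v)}).Reachable u z) : T.dist v z = T.dist u z + 1 := by
  have hbr := tree_bridge hT h
  have hc := hT.1
  have hle : T.dist v z ≤ T.dist u z + 1 := by
    have := hc.dist_triangle (u := v) (v := u) (w := z)
    have h1 : T.dist v u = 1 := dist_eq_one_iff_adj.mpr h.symm
    omega
  have hge : T.dist u z + 1 ≤ T.dist v z := by
    obtain ⟨p, hp, hlen⟩ := (hc v z).exists_path_of_dist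
    by_cases hmem : s(u, v) ∈ p.edges
    · cases p with
      | nil => simp at hmem
      | @cons _ c _ hac q =>
        by_cases hcu : c = u
        · have hq : T.dist u z ≤ q.length := by rw [← hcu]; exact dist_le q
          simp only [Walk.length_cons] at hlen
          omega
        · exfalso
          have hne : s(u, v) ≠ s(v, c) := by
            intro hne'
            rw [Sym2.eq_iff] at hne'
            rcases hne' with ⟨h1', h2'⟩ | ⟨h1', h2'⟩
            · exact h.ne h1'
            · exact hcu h1'.symm
          rw [Walk.edges_cons, List.mem_cons] at hmem
          rcases hmem with hmem | hmem
          · exact hne hmem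
          · have hv : v ∈ q.support := Walk.snd_mem_support_of_mem_edges q hmem
            rw [Walk.cons_isPath_iff] at hp
            exact hp.2 hv
    · exfalso
      have hq : ∀ e ∈ p.edges, e ∉ ({s(u,v)} : Set (Sym2 V)) := by
        intro e he
        simp only [Set.mem_singleton_iff]
        rintro rfl
        exact hmem he
      have : (T.deleteEdges {s(u,v)}).Reachable v z := ⟨p.toDeleteEdges _ hq⟩
      exact hbr (hz.trans this.symm)
  omega

lemma key_diff {T : SimpleGraph V} (hT : T.IsTree) {u v : V} (h : T.Adj u v) (z : V) :
    ((T.dist u z : ℝ)) - T.dist v z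
      = if (T.deleteEdges {s(u,v)}).Reachable u z then -1 else 1 := by
  split_ifs with hr
  · have := dist_succ hT h hr
    rw [this]; push_cast; ring
  · have hr' : (T.deleteEdges {s(u,v)}).Reachable v z := by
      rcases reach_total hT.1 h z with h' | h'
      · exact absurd h' hr
      · exact h'
    have hs : ({s(v,u)} : Set (Sym2 V)) = {s(u,v)} := by rw [Sym2.eq_swap]
    have := dist_succ hT h.symm (z := z) (by rw [hs]; exact hr')
    rw [this]; push_cast; ring

lemma sum_diff {T : SimpleGraph V} (hT : T.IsTree) {u v : V} (h : T.Adj u v) (x : V → ℝ) :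
    ∑ z, (((T.dist u z : ℝ)) - T.dist v z) * x z
      = (∑ z, x z)
        - 2 * ∑ z ∈ Finset.univ.filter fun z => (T.deleteEdges {s(u,v)}).Reachable u z, x z := by
  have : ∀ z, (((T.dist u z : ℝ)) - T.dist v z) * x z
      = (if (T.deleteEdges {s(u,v)}).Reachable u z then -(x z) else x z) := by
    intro z
    rw [key_diff hT h z]
    split_ifs <;> ring
  rw [Finset.sum_congr rfl fun z _ => this z, Finset.sum_ite, Finset.sum_neg_distrib]
  rw [← Finset.sum_filter_add_sum_filter_not Finset.univ
    (fun z => (T.deleteEdges {s(u,v)}).Reachable u z) x]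
  ring

end Helpers

/-- Tree case of Lemma 2.1(i): let `u₁v₁` and `u₂v₂` be edges of a finite tree `T` with
`d_T(u₁,u₂) = d_T(v₁,v₂) + 2`, let `T_i` be the component of `T − u_iv_i` containing `u_i`,
and let `x` be a positive eigenvector of the distance matrix for `ρ(T)`. Then
`ρ(T)(x_{u₁} − x_{u₂}) − ρ(T)(x_{v₁} − x_{v₂}) = 2(σ(T₂) − σ(T₁))`. -/
theorem stmt_8 {V : Type*} [Fintype V] [DecidableEq V]
    (T : SimpleGraph V) (hT : T.IsTree) (u₁ v₁ u₂ v₂ : V)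
    (h1 : T.Adj u₁ v₁) (h2 : T.Adj u₂ v₂)
    (hdist : T.dist u₁ u₂ = T.dist v₁ v₂ + 2)
    (D : Matrix V V ℝ) (hD : D = Matrix.of fun a b => (T.dist a b : ℝ))
    (ρ : ℝ) (hmax : ∀ μ : ℝ, Module.End.HasEigenvalue (Matrix.mulVecLin D) μ → μ ≤ ρ)
    (x : V → ℝ) (hx : ∀ z, 0 < x z) (heig : D *ᵥ x = ρ • x) :
    ρ * (x u₁ - x u₂) - ρ * (x v₁ - x v₂)
      = 2 * ((∑ z ∈ Finset.univ.filter fun z =>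
                (T.deleteEdges {s(u₂, v₂)}).Reachable u₂ z, x z)
          - ∑ z ∈ Finset.univ.filter fun z =>
                (T.deleteEdges {s(u₁, v₁)}).Reachable u₁ z, x z) := by
  have hrow : ∀ w, ρ * x w = ∑ z, (T.dist w z : ℝ) * x z := by
    intro w
    have h := congrFun heig w
    simp only [Matrix.mulVec, dotProduct, Pi.smul_apply, smul_eq_mul, hD, Matrix.of_apply] at h
    exact h.symm
  have e : ∀ (u v : V), T.Adj u v → ρ * x u - ρ * x v
      = (∑ z, x z)
        - 2 * ∑ z ∈ Finset.univ.filter fun z => (T.deleteEdges {s(u,v)}).Reachable u z, x z := by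
    intro u v h
    rw [hrow, hrow, ← Finset.sum_sub_distrib]
    rw [← sum_diff hT h x]
    congr 1
    ext z
    ring
  have e1 := e u₁ v₁ h1
  have e2 := e u₂ v₂ h2
  linarith
end
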